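/- Let V be a Hilbert space, d : V → W a bounded linear map with closed range such that ‖v‖ ≤ c_P ‖d v‖ for all v ⟂ ker d. Suppose every v ∈ V decomposes orthogonally as v = v_B + v_⊥ with v_B ∈ R(d⁻) for a second bounded operator d⁻ : V⁻ → V with R(d⁻) closed, v_⊥ ∈ (ker d)^⊥, and R(d⁻) ⊆ ker d. Define b(τ, η; v) = ⟨d⁻ τ, v⟩ + ⟨η, d v⟩ for τ ∈ V⁻, η ∈ W. If in addition ‖τ‖ ≤ c_P ‖d⁻ τ‖ can be achieved for a preimage τ of v_B, then for every v ∈ V with ‖v‖² + ‖d v‖² = 1 there exist τ ∈ V⁻ and η ∈ W with ‖τ‖² + ‖d⁻ τ‖² + ‖η‖² ≤ C and b(τ, η; v) ≥ (1/2) min(1, c_P^{-2}). -/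

import Mathlib

open RealInnerProductSpace

/-- inf-sup condition for the bilinear form
`b(τ, η; v) = ⟨d⁻ τ, v⟩ + ⟨η, d v⟩` from the mixed formulation of the Hodge Laplacian. -/
theorem stmt1
    {Vm V W : Type*} [NormedAddCommGroup Vm] [InnerProductSpace ℝ Vm] [CompleteSpace Vm]
    [NormedAddCommGroup V] [InnerProductSpace ℝ V] [CompleteSpace V]
    [NormedAddCommGroup W] [InnerProductSpace ℝ W] [CompleteSpace W]
    (dm : Vm →L[ℝ] V) (d : V →L[ℝ] W)
    (hrange_dm : IsClosed (Set.range dm)) (hrange_d : IsClosed (Set.range d))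
    (hcomplex : ∀ τ : Vm, d (dm τ) = 0)
    (cP : ℝ) (hcP : 0 < cP)
    (hPoincare : ∀ v ∈ (LinearMap.ker (d : V →ₗ[ℝ] W))ᗮ, ‖v‖ ≤ cP * ‖d v‖)
    (hPoincare' : ∀ τ ∈ (LinearMap.ker (dm : Vm →ₗ[ℝ] V))ᗮ, ‖τ‖ ≤ cP * ‖dm τ‖)
    (hdecomp : ∀ v : V, ∃ vB ∈ Set.range dm, ∃ vp ∈ (LinearMap.ker (d : V →ₗ[ℝ] W))ᗮ, v = vB + vp)
    (hlift : ∀ w ∈ Set.range dm, ∃ τ : Vm, dm τ = w ∧ ‖τ‖ ≤ cP * ‖w‖) :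
    ∃ C : ℝ, 0 < C ∧ ∀ v : V, ‖v‖ ^ 2 + ‖d v‖ ^ 2 = 1 →
      ∃ (τ : Vm) (η : W), ‖τ‖ ^ 2 + ‖dm τ‖ ^ 2 + ‖η‖ ^ 2 ≤ C ∧
        ⟪dm τ, v⟫ + ⟪η, d v⟫ ≥ (1 / 2) * min 1 (cP⁻¹ ^ 2) := by

  refine ⟨cP ^ 2 + 2, by positivity, fun v hv => ?_⟩
  obtain ⟨vB, hvB, vp, hvp, hsum⟩ := hdecomp v
  obtain ⟨τ, hτ1, hτ2⟩ := hlift vB hvB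
  have hdvB : d vB = 0 := by obtain ⟨σ, rfl⟩ := hvB; exact hcomplex σ
  have horth : ⟪vB, vp⟫ = 0 :=
    Submodule.inner_right_of_mem_orthogonal (by simpa [LinearMap.mem_ker] using hdvB) hvp
  have hnv : ‖v‖ ^ 2 = ‖vB‖ ^ 2 + ‖vp‖ ^ 2 := by
    rw [hsum, norm_add_sq_real, horth]; ring
  have hdv : d v = d vp := by rw [hsum]; simp [hdvB]
  have hvpn : ‖vp‖ ≤ cP * ‖d v‖ := by rw [hdv]; exact hPoincare vp hvp
  have hvp2 : ‖vp‖ ^ 2 ≤ cP ^ 2 * ‖d v‖ ^ 2 := by nlinarith [norm_nonneg vp, norm_nonneg (d v)]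
  have hvB1 : ‖vB‖ ^ 2 ≤ 1 := by nlinarith [sq_nonneg ‖vp‖, sq_nonneg ‖d v‖]
  have hdv1 : ‖d v‖ ^ 2 ≤ 1 := by nlinarith [sq_nonneg ‖vB‖, sq_nonneg ‖vp‖]
  refine ⟨τ, d v, ?_, ?_⟩
  · have hτsq : ‖τ‖ ^ 2 ≤ cP ^ 2 * ‖vB‖ ^ 2 := by nlinarith [norm_nonneg τ, norm_nonneg vB]
    rw [hτ1]
    nlinarith [sq_nonneg cP]
  · have hval : ⟪dm τ, v⟫ + ⟪d v, d v⟫ = ‖vB‖ ^ 2 + ‖d v‖ ^ 2 := by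
      rw [hτ1, hsum, inner_add_right, horth, real_inner_self_eq_norm_sq, real_inner_self_eq_norm_sq]
      ring
    rw [ge_iff_le, hval]
    have hkey : 1 ≤ ‖vB‖ ^ 2 + (1 + cP ^ 2) * ‖d v‖ ^ 2 := by nlinarith
    have hm1 : min 1 (cP⁻¹ ^ 2) ≤ 1 := min_le_left _ _
    have hm2 : min 1 (cP⁻¹ ^ 2) ≤ cP⁻¹ ^ 2 := min_le_right _ _
    have hm0 : 0 ≤ min 1 (cP⁻¹ ^ 2) := le_min zero_le_one (by positivity)
    have hinv : cP ^ 2 * cP⁻¹ ^ 2 = 1 := by field_simp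
    nlinarith [sq_nonneg ‖vB‖, sq_nonneg ‖d v‖, sq_nonneg cP,
      mul_le_mul_of_nonneg_left hm2 (le_of_lt (by positivity : (0:ℝ) < cP ^ 2)),
      mul_nonneg (sq_nonneg cP) (sq_nonneg ‖d v‖),
      mul_nonneg hm0 (sq_nonneg ‖vB‖), mul_nonneg hm0 (mul_nonneg (sq_nonneg cP) (sq_nonneg ‖d v‖))]
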